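/- arXiv:2007.11517 — 2 statements merged into one kernel-verified Lean document; each statement's English description precedes it below -/
import Mathlib

section
/- (δ-density forces all cylinders to be visited.) In the same setting, set κ = r_min ε. If the set {v_0, S_{i_1}v_0, ..., S_{i_n}···S_{i_1}v_0} is κδ-dense in F, then for every j ∈ P_δ there exists 0 ≤ k ≤ n with [i_k...i_1 i_0] ⊆ [j]. -/
/-- The cylinder set of a finite word: infinite sequences beginning with that word. -/
def cyl {N : ℕ} (l : List (Fin N)) : Set (ℕ → Fin N) :=
  {ω | ∀ k : Fin l.length, ω k = l.get k}

/-- Product of contraction ratios along a word. -/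
def rword {N : ℕ} (r : Fin N → ℝ) (l : List (Fin N)) : ℝ := (l.map r).prod

/-- The stopping set P_δ = { i : r_i ≤ δ < r_{i^-} }. -/
def Pdelta {N : ℕ} (r : Fin N → ℝ) (δ : ℝ) : Set (List (Fin N)) :=
  {l | rword r l ≤ δ ∧ δ < rword r l.dropLast}


/-- Composition S_i = S_{i_1} ∘ ⋯ ∘ S_{i_n} along a word. -/
def Sword {N : ℕ} {X : Type*} (S : Fin N → X → X) (l : List (Fin N)) (v : X) : X :=
  l.foldr (fun a w => S a w) v

/-- The chaos game orbit: x_0 = v, x_{k+1} = S_{i_{k+1}} x_k, where i_{k+1} = ω k. -/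
def orbit {N : ℕ} {X : Type*} (S : Fin N → X → X) (ω : ℕ → Fin N) (v : X) : ℕ → X
  | 0 => v
  | k + 1 => S (ω k) (orbit S ω v k)

/-- The word i_k i_{k-1} ... i_1 of the first k chosen letters, most recent first
(here i_{m} = ω (m-1)). -/
def histWord {N : ℕ} (ω : ℕ → Fin N) (k : ℕ) : List (Fin N) :=
  List.ofFn (fun t : Fin k => ω (k - 1 - (t : ℕ)))

open scoped RealInnerProductSpace

section aux

variable {E : Type*} [NormedAddCommGroup E] [InnerProductSpace ℝ E] [FiniteDimensional ℝ E]

lemma isom_surj (g : E → E) (hg0 : g 0 = 0) (hg : ∀ u v, dist (g u) (g v) = dist u v) :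
    Function.Surjective g := by
  have hnorm : ∀ u, ‖g u‖ = ‖u‖ := by
    intro u; simpa [hg0, dist_eq_norm] using hg u 0
  have hsub : ∀ u v, ‖g u - g v‖ = ‖u - v‖ := by
    intro u v; simpa [dist_eq_norm] using hg u v
  have hinner : ∀ u v, ⟪g u, g v⟫ = ⟪u, v⟫ := by
    intro u v
    rw [real_inner_eq_norm_mul_self_add_norm_mul_self_sub_norm_sub_mul_self_div_two,
      real_inner_eq_norm_mul_self_add_norm_mul_self_sub_norm_sub_mul_self_div_two,
      hnorm, hnorm, hsub]
  rcases subsingleton_or_nontrivial E with hE | hE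
  · exact fun y => ⟨y, Subsingleton.elim _ _⟩
  · set m := Module.finrank ℝ E with hm
    have hm0 : 0 < m := Module.finrank_pos
    haveI : Nonempty (Fin m) := ⟨⟨0, hm0⟩⟩
    let b : OrthonormalBasis (Fin m) ℝ E := stdOrthonormalBasis ℝ E
    have hon : Orthonormal ℝ (fun i => g (b i)) := by
      have hb := b.orthonormal
      rw [orthonormal_iff_ite] at hb ⊢
      intro i j
      rw [hinner]; exact hb i j
    let B : Module.Basis (Fin m) ℝ E :=
      basisOfLinearIndependentOfCardEqFinrank hon.linearIndependent (by simp [hm])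
    have hB : ∀ i, B i = g (b i) := fun i => by
      simp [B, coe_basisOfLinearIndependentOfCardEqFinrank]
    intro y
    refine ⟨∑ i, ⟪y, g (b i)⟫ • b i, ?_⟩
    refine (InnerProductSpace.ext_inner_right_basis B fun i => ?_)
    rw [hB, hinner]
    rw [sum_inner]
    simp only [real_inner_smul_left]
    have hb := b.orthonormal
    rw [orthonormal_iff_ite] at hb
    simp [hb, Finset.sum_ite_eq']

lemma sim_surj (f : E → E) (c : ℝ) (hc : 0 < c)
    (h : ∀ u v, dist (f u) (f v) = c * dist u v) : Function.Surjective f := by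
  set g : E → E := fun y => c⁻¹ • (f y - f 0) with hgdef
  have hg0 : g 0 = 0 := by simp [hgdef]
  have hgd : ∀ u v, dist (g u) (g v) = dist u v := by
    intro u v
    simp only [hgdef, dist_eq_norm, ← smul_sub, norm_smul, Real.norm_eq_abs,
      abs_inv, abs_of_pos hc, sub_sub_sub_cancel_right]
    rw [← dist_eq_norm, h, inv_mul_cancel_left₀ hc.ne']
    exact (dist_eq_norm u v)
  have hs := isom_surj g hg0 hgd
  intro z
  obtain ⟨y, hy⟩ := hs (c⁻¹ • (z - f 0))
  refine ⟨y, ?_⟩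
  have : c • (g y) = c • (c⁻¹ • (z - f 0)) := by rw [hy]
  rw [hgdef] at this
  simp only [smul_inv_smul₀ hc.ne'] at this
  have h2 : f y - f 0 = z - f 0 := this
  exact sub_left_injective h2

lemma sim_image_ball (f : E → E) (c : ℝ) (hc : 0 < c)
    (h : ∀ u v, dist (f u) (f v) = c * dist u v) (x : E) (ρ : ℝ) :
    f '' Metric.ball x ρ = Metric.ball (f x) (c * ρ) := by
  ext y
  constructor
  · rintro ⟨u, hu, rfl⟩
    rw [Metric.mem_ball] at hu ⊢
    rw [h]
    exact (mul_lt_mul_iff_right₀ hc).2 hu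
  · intro hy
    obtain ⟨u, rfl⟩ := sim_surj f c hc h y
    rw [Metric.mem_ball, h] at hy
    exact ⟨u, Metric.mem_ball.2 ((mul_lt_mul_iff_right₀ hc).1 hy), rfl⟩

lemma sim_isOpenMap (f : E → E) (c : ℝ) (hc : 0 < c)
    (h : ∀ u v, dist (f u) (f v) = c * dist u v) {U : Set E} (hU : IsOpen U) :
    IsOpen (f '' U) := by
  rw [Metric.isOpen_iff] at hU ⊢
  rintro _ ⟨u, hu, rfl⟩
  obtain ⟨ρ, hρ, hsub⟩ := hU u hu
  exact ⟨c * ρ, by positivity, by rw [← sim_image_ball f c hc h]; exact Set.image_mono hsub⟩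

end aux

section words

variable {N : ℕ} {X : Type*}

lemma rword_nil (r : Fin N → ℝ) : rword r [] = 1 := by simp [rword]

lemma rword_cons (r : Fin N → ℝ) (a : Fin N) (l : List (Fin N)) :
    rword r (a :: l) = r a * rword r l := by simp [rword]

lemma rword_append (r : Fin N → ℝ) (l₁ l₂ : List (Fin N)) :
    rword r (l₁ ++ l₂) = rword r l₁ * rword r l₂ := by simp [rword]

lemma rword_pos {r : Fin N → ℝ} (hr : ∀ i, r i ∈ Set.Ioo (0:ℝ) 1) (l : List (Fin N)) :
    0 < rword r l := by
  induction l with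
  | nil => simp [rword_nil]
  | cons a l ih => rw [rword_cons]; exact mul_pos (hr a).1 ih

lemma rword_le_one {r : Fin N → ℝ} (hr : ∀ i, r i ∈ Set.Ioo (0:ℝ) 1) (l : List (Fin N)) :
    rword r l ≤ 1 := by
  induction l with
  | nil => simp [rword_nil]
  | cons a l ih =>
    rw [rword_cons]
    nlinarith [(hr a).1.le, (hr a).2, rword_pos hr l]

lemma Sword_nil (S : Fin N → X → X) (v : X) : Sword S [] v = v := rfl

lemma Sword_cons (S : Fin N → X → X) (a : Fin N) (l : List (Fin N)) (v : X) :
    Sword S (a :: l) v = S a (Sword S l v) := rfl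

lemma Sword_append (S : Fin N → X → X) (l₁ l₂ : List (Fin N)) (v : X) :
    Sword S (l₁ ++ l₂) v = Sword S l₁ (Sword S l₂ v) := by
  simp [Sword, List.foldr_append]

lemma histWord_succ (ω : ℕ → Fin N) (k : ℕ) :
    histWord ω (k+1) = ω k :: histWord ω k := by
  apply List.ext_getElem
  · simp [histWord]
  · intro i h1 h2
    rcases i with _ | i <;> simp [histWord] <;> congr 1 <;> omega

lemma orbit_eq_Sword (S : Fin N → X → X) (ω : ℕ → Fin N) (v : X) (k : ℕ) :
    orbit S ω v k = Sword S (histWord ω k) v := by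
  induction k with
  | zero => simp [orbit, histWord, Sword]
  | succ k ih => rw [orbit, ih, histWord_succ, Sword_cons]

lemma Sword_image_subset (S : Fin N → X → X) {A : Set X} (hA : ∀ i, S i '' A ⊆ A) :
    ∀ l : List (Fin N), Sword S l '' A ⊆ A := by
  intro l
  induction l with
  | nil => rintro _ ⟨v, hv, rfl⟩; exact hv
  | cons a l ih =>
    rintro _ ⟨v, hv, rfl⟩
    rw [Sword_cons]
    exact hA a ⟨Sword S l v, ih ⟨v, hv, rfl⟩, rfl⟩

lemma prefix_trichotomy {α : Type*} (l₁ l₂ : List α) :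
    l₁ <+: l₂ ∨ l₂ <+: l₁ ∨
      ∃ p a b s₁ s₂, a ≠ b ∧ l₁ = p ++ a :: s₁ ∧ l₂ = p ++ b :: s₂ := by
  induction l₁ generalizing l₂ with
  | nil => exact Or.inl (List.nil_prefix)
  | cons x xs ih =>
    cases l₂ with
    | nil => exact Or.inr (Or.inl List.nil_prefix)
    | cons y ys =>
      by_cases hxy : x = y
      · subst hxy
        rcases ih ys with h | h | ⟨p, a, b, s₁, s₂, hab, h1, h2⟩
        · exact Or.inl (List.cons_prefix_cons.2 ⟨rfl, h⟩)
        · exact Or.inr (Or.inl (List.cons_prefix_cons.2 ⟨rfl, h⟩))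
        · exact Or.inr (Or.inr ⟨x :: p, a, b, s₁, s₂, hab, by simp [h1], by simp [h2]⟩)
      · exact Or.inr (Or.inr ⟨[], x, y, xs, ys, hxy, rfl, rfl⟩)

lemma cyl_mono {l₁ l₂ : List (Fin N)} (h : l₁ <+: l₂) : cyl l₂ ⊆ cyl l₁ := by
  intro ω hω k
  have hk : (k : ℕ) < l₂.length := lt_of_lt_of_le k.2 h.length_le
  have := hω ⟨k, hk⟩
  simp only [List.get_eq_getElem] at this ⊢
  rw [this, h.getElem k.2]

end words

/-- with κ = r_min ε, if {v_0, S_{i_1}v_0, ..., S_{i_n}⋯S_{i_1}v_0}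
is κδ-dense in F then the symbolic orbit visits every cylinder [j], j ∈ P_δ. -/
theorem stmt11 {N d : ℕ} (hN : 0 < N)
    (S : Fin N → EuclideanSpace ℝ (Fin d) → EuclideanSpace ℝ (Fin d))
    (r : Fin N → ℝ) (hr : ∀ i, r i ∈ Set.Ioo (0 : ℝ) 1)
    (hsim : ∀ i x y, dist (S i x) (S i y) = r i * dist x y)
    (rmin : ℝ) (hrmin : IsLeast (Set.range r) rmin)
    (F : Set (EuclideanSpace ℝ (Fin d)))
    (hFc : IsCompact F) (hFne : F.Nonempty)
    (hFinv : F = ⋃ i, S i '' F)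
    (U : Set (EuclideanSpace ℝ (Fin d)))
    (hUopen : IsOpen U) (hUbdd : Bornology.IsBounded U)
    (hUsub : ∀ i, S i '' U ⊆ U)
    (hUdisj : ∀ i j, i ≠ j → Disjoint (S i '' U) (S j '' U))
    (x : EuclideanSpace ℝ (Fin d)) (hx : x ∈ F)
    (ε : ℝ) (hε : 0 < ε) (hball : Metric.ball x ε ⊆ U)
    (κ : ℝ) (hκ : κ = rmin * ε)
    (δ : ℝ) (hδ0 : 0 < δ) (hδ : δ < rmin)
    (v0 : EuclideanSpace ℝ (Fin d))
    (i0 : List (Fin N)) (hi0 : i0 ∈ Pdelta r δ) (hv0 : v0 ∈ Sword S i0 '' F)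
    (n : ℕ) (ω : ℕ → Fin N)
    (hdense : ∀ z ∈ F, ∃ k ≤ n, dist z (orbit S ω v0 k) ≤ κ * δ) :
    ∀ j ∈ Pdelta r δ, ∃ k ≤ n, cyl (histWord ω k ++ i0) ⊆ cyl j := by
  haveI : Nonempty (Fin N) := ⟨⟨0, hN⟩⟩
  obtain ⟨imin, himin⟩ : ∃ i, r i = rmin := hrmin.1
  have hrmin_pos : 0 < rmin := himin ▸ (hr imin).1
  have hrmin_lt1 : rmin < 1 := himin ▸ (hr imin).2
  have hrmin_le : ∀ i, rmin ≤ r i := fun i => hrmin.2 ⟨i, rfl⟩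
  have hxU : x ∈ U := hball (Metric.mem_ball_self hε)
  -- similarity of words
  have hSdist : ∀ (l : List (Fin N)) u v,
      dist (Sword S l u) (Sword S l v) = rword r l * dist u v := by
    intro l
    induction l with
    | nil => intro u v; simp [Sword_nil, rword_nil]
    | cons a l ih =>
      intro u v
      rw [Sword_cons, Sword_cons, hsim, ih, rword_cons, mul_assoc]
  have hSinj : ∀ l : List (Fin N), Function.Injective (Sword S l) := by
    intro l u v huv
    have h := hSdist l u v
    rw [huv, dist_self] at h
    have := (rword_pos hr l).ne'
    have hd : dist u v = 0 := by
      rcases mul_eq_zero.1 h.symm with h' | h'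
      · exact absurd h' this
      · exact h'
    exact dist_eq_zero.1 hd
  have hSF : ∀ i, S i '' F ⊆ F := fun i =>
    le_trans (Set.subset_iUnion (fun i => S i '' F) i) hFinv.ge
  have hSwF := Sword_image_subset S hSF
  have hSwU := Sword_image_subset S hUsub
  -- F ⊆ closure U
  obtain ⟨imax, hmax⟩ := Finite.exists_max r
  have hFclU : F ⊆ closure U := by
    intro z hz
    rw [Metric.mem_closure_iff]
    intro η hη
    obtain ⟨R, hR⟩ := hFc.isBounded.subset_closedBall x
    have hR0 : 0 ≤ R := by
      have := hR hx; rwa [Metric.mem_closedBall, dist_self] at this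
    obtain ⟨m, hm⟩ := exists_pow_lt_of_lt_one (div_pos hη (by linarith : (0:ℝ) < R + 1))
      (hr imax).2
    have hwlen : ∀ l : List (Fin N), rword r l ≤ (r imax) ^ l.length := by
      intro l
      induction l with
      | nil => simp [rword_nil]
      | cons a l ih =>
        rw [rword_cons, List.length_cons, pow_succ]
        rw [mul_comm ((r imax)^l.length) (r imax)]
        exact mul_le_mul (hmax a) ih (rword_pos hr l).le (hr imax).1.le
    have hdecomp : ∀ m z, z ∈ F → ∃ w : List (Fin N), w.length = m ∧ z ∈ Sword S w '' F := by
      intro m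
      induction m with
      | zero => exact fun z hz => ⟨[], rfl, ⟨z, hz, rfl⟩⟩
      | succ m ih =>
        intro z hz
        rw [hFinv] at hz
        obtain ⟨_, ⟨i, rfl⟩, z', hz', rfl⟩ := hz
        obtain ⟨w, hwl, v, hvF, hvz⟩ := ih z' hz'
        exact ⟨i :: w, by simp [hwl], v, hvF, by rw [Sword_cons, hvz]⟩
    obtain ⟨w, hwl, v, hvF, hvz⟩ := hdecomp m z hz
    refine ⟨Sword S w x, hSwU w ⟨x, hxU, rfl⟩, ?_⟩
    have hvx : dist v x ≤ R := by
      have := hR hvF; rwa [Metric.mem_closedBall] at this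
    calc dist z (Sword S w x) = rword r w * dist v x := by rw [← hvz, hSdist]
      _ ≤ (r imax) ^ m * R := by
          rw [← hwl]
          exact mul_le_mul (hwlen w) hvx dist_nonneg (pow_nonneg (hr imax).1.le _)
      _ < η := by
          have hm' : r imax ^ m * (R + 1) < η :=
            (lt_div_iff₀ (by linarith : (0:ℝ) < R+1)).1 hm
          nlinarith [pow_nonneg (hr imax).1.le m]
  -- main argument
  intro j hj
  obtain ⟨hj1, hj2⟩ := hj
  have hjne : j ≠ [] := by
    rintro rfl
    rw [rword_nil] at hj1
    linarith
  have hjgt : rmin * δ < rword r j := by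
    conv_rhs => rw [← List.dropLast_append_getLast hjne]
    rw [rword_append]
    have h1 : rword r [j.getLast hjne] = r (j.getLast hjne) := by simp [rword]
    rw [h1]
    nlinarith [hrmin_le (j.getLast hjne), hj2, rword_pos hr j.dropLast, (hr (j.getLast hjne)).1]
  have hzF : Sword S j x ∈ F := hSwF j ⟨x, hx, rfl⟩
  obtain ⟨k, hkn, hkd⟩ := hdense _ hzF
  obtain ⟨v', hv'F, hv'⟩ := hv0
  set w := histWord ω k ++ i0 with hwdef
  have horb : orbit S ω v0 k = Sword S w v' := by
    rw [orbit_eq_Sword, hwdef, Sword_append, hv']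
  refine ⟨k, hkn, ?_⟩
  suffices hpre : j <+: w by exact cyl_mono hpre
  -- orbit k lies in Sword S j '' ball x ε
  obtain ⟨u, huball, huj⟩ : orbit S ω v0 k ∈ Sword S j '' Metric.ball x ε := by
    rw [sim_image_ball _ _ (rword_pos hr j) (hSdist j), Metric.mem_ball, dist_comm]
    calc dist (Sword S j x) (orbit S ω v0 k) ≤ κ * δ := hkd
      _ < rword r j * ε := by rw [hκ]; nlinarith
  have huU : u ∈ U := hball huball
  have hrw_le : rword r w ≤ δ := by
    rw [hwdef, rword_append]
    nlinarith [rword_le_one hr (histWord ω k), rword_pos hr (histWord ω k),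
      rword_pos hr i0, hi0.1]
  rcases prefix_trichotomy j w with h | h | ⟨p, a, b, s₁, s₂, hab, hj', hw'⟩
  · exact h
  · obtain ⟨t, ht⟩ := h
    rcases t with _ | ⟨c, t⟩
    · have : w = j := by simpa using ht
      exact this ▸ List.prefix_rfl
    · exfalso
      have hdl : j.dropLast = w ++ (c :: t).dropLast := by
        rw [← ht, List.dropLast_append_cons]
      have hle : rword r j.dropLast ≤ δ := by
        rw [hdl, rword_append]
        nlinarith [rword_le_one hr (c :: t).dropLast, rword_pos hr w,
          rword_pos hr (c :: t).dropLast]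
      linarith
  · exfalso
    have h1 : Sword S (p ++ a :: s₁) u = Sword S (p ++ b :: s₂) v' := by
      rw [← hj', ← hw', huj, horb]
    rw [Sword_append, Sword_append] at h1
    have hq := hSinj p h1
    have hqa : Sword S (a :: s₁) u ∈ S a '' U := by
      rw [Sword_cons]
      exact ⟨_, hSwU s₁ ⟨u, huU, rfl⟩, rfl⟩
    have hqb : Sword S (a :: s₁) u ∈ closure (S b '' U) := by
      rw [hq, Sword_cons]
      have hcl : Sword S s₂ v' ∈ closure U := hFclU (hSwF s₂ ⟨v', hv'F, rfl⟩)
      have hcont : Continuous (S b) := by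
        refine (LipschitzWith.of_dist_le_mul (K := Real.toNNReal (r b)) ?_).continuous
        intro p q
        rw [hsim, Real.coe_toNNReal _ (hr b).1.le]
      exact image_closure_subset_closure_image hcont ⟨_, hcl, rfl⟩
    have hopen : IsOpen (S a '' U) := sim_isOpenMap (S a) (r a) (hr a).1 (hsim a) hUopen
    have hdisj := hUdisj a b hab
    have hsubc : closure (S b '' U) ⊆ (S a '' U)ᶜ := by
      apply closure_minimal _ hopen.isClosed_compl
      exact Set.subset_compl_iff_disjoint_left.2 hdisj
    exact hsubc hqb hqa
end

section
/- (Probability of fast hitting.) Fix 0 < δ < r_min and distinct states i, j ∈ P_δ of the Markov chain (X_t^δ). Suppose that whenever X_0 = i, the hitting time τ_j = min{t ≥ 0 : X_t = j} satisfies τ_j ≥ m (at least m transitions are needed). Let p = max_a p_a, ℓ_δ = min{|k| : k ∈ P_δ}, L_δ = max{|k| : k ∈ P_δ}. Then P_i(τ_j < L_δ) ≤ p^m/(1−p) + p^{ℓ_δ}(L_δ − ℓ_δ). -/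
/-- Product of probabilities along a word. -/
def pword {N : ℕ} (p : Fin N → ℝ) (l : List (Fin N)) : ℝ := (l.map p).prod

/-- The word j occurs at time n (using only the appended letters ω 0, ..., ω (n-1),
read most-recent-first): j appears as the block of the last |j| appended letters. -/
def occursAt {N : ℕ} (j : List (Fin N)) (ω : ℕ → Fin N) (n : ℕ) : Prop :=
  j.length ≤ n ∧ ∀ t : Fin j.length, j.get t = ω (n - 1 - (t : ℕ))

/-- The all-new-bits waiting time w_j: the first time j is completed using
entirely new appended letters. -/
noncomputable def wtime {N : ℕ} (j : List (Fin N)) (ω : ℕ → Fin N) : ℕ :=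
  sInf {n | occursAt j ω n}

lemma cyl_subset_prefix {N : ℕ} (hN2 : 2 ≤ N) {l l' : List (Fin N)}
    (h : cyl l ⊆ cyl l') : l' <+: l := by
  have hN : 0 < N := by omega
  set ωa : Fin N → (ℕ → Fin N) := fun a k => if h : k < l.length then l.get ⟨k, h⟩ else a with hωa
  have hmem : ∀ a, ωa a ∈ cyl l := by
    intro a k
    simp only [hωa, dif_pos k.isLt]
  have hmem' : ∀ a, ωa a ∈ cyl l' := fun a => h (hmem a)
  have hlen : l'.length ≤ l.length := by
    by_contra hc
    push_neg at hc
    have h0 := hmem' ⟨0, hN⟩ ⟨l.length, hc⟩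
    have h1 := hmem' ⟨1, by omega⟩ ⟨l.length, hc⟩
    simp only [hωa, dif_neg (lt_irrefl l.length)] at h0 h1
    rw [← h1] at h0
    exact absurd (congrArg Fin.val h0) (by simp)
  have : l' = l.take l'.length := by
    apply List.ext_getElem
    · simp [hlen]
    · intro n h1 h2
      have := hmem' ⟨0, hN⟩ ⟨n, h1⟩
      simp only [hωa, dif_pos (lt_of_lt_of_le h1 hlen)] at this
      rw [List.getElem_take]
      simp only [List.get_eq_getElem] at this
      exact this.symm
  rw [this]
  exact List.take_prefix _ _

lemma chain_prefix {N : ℕ} (hN2 : 2 ≤ N) (i : List (Fin N))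
    (X : (ℕ → Fin N) → ℕ → List (Fin N))
    (hX0 : ∀ ω, X ω 0 = i)
    (hXstep : ∀ ω t, cyl (ω t :: X ω t) ⊆ cyl (X ω (t + 1)))
    (ω : ℕ → Fin N) :
    ∀ t, X ω t <+: (List.ofFn fun s : Fin t => ω (t - 1 - (s : ℕ))) ++ i := by
  intro t
  induction t with
  | zero => simp [hX0]
  | succ t ih =>
    have h1 : X ω (t + 1) <+: ω t :: X ω t := cyl_subset_prefix hN2 (hXstep ω t)
    have h2 : ω t :: X ω t <+: ω t :: ((List.ofFn fun s : Fin t => ω (t - 1 - (s : ℕ))) ++ i) :=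
      List.cons_prefix_cons.mpr ⟨rfl, ih⟩
    have h3 : (List.ofFn fun s : Fin (t+1) => ω (t + 1 - 1 - (s : ℕ))) =
        ω t :: List.ofFn fun s : Fin t => ω (t - 1 - (s : ℕ)) := by
      rw [List.ofFn_succ]
      have e1 : (fun s : Fin t => ω (t + 1 - 1 - ((s.succ : Fin (t+1)) : ℕ))) =
          fun s : Fin t => ω (t - 1 - (s : ℕ)) :=
        funext fun s => congrArg ω (by simp only [Fin.val_succ]; omega)
      simp only [Fin.val_zero, Nat.sub_zero, Nat.add_sub_cancel] at e1 ⊢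
      rw [e1]
    rw [h3]
    exact h1.trans h2
open MeasureTheory Finset

lemma measure_constrained_le {N : ℕ} (p : Fin N → ℝ)
    (hp : ∀ a, 0 ≤ p a) (hpsum : ∑ a, p a = 1)
    (μ : Measure (ℕ → Fin N))
    (hμ : ∀ (n : ℕ) (f : Fin n → Fin N),
      μ {ω | ∀ k : Fin n, ω k = f k} = ENNReal.ofReal (∏ k, p (f k)))
    (t : ℕ) (S : Finset (Fin t)) (v : Fin t → Fin N) :
    μ {ω | ∀ k ∈ S, ω k = v k} ≤ ENNReal.ofReal (∏ k ∈ S, p (v k)) := by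
  classical
  set F : Finset (Fin t → Fin N) :=
    Finset.univ.filter (fun g => ∀ k ∈ S, g k = v k) with hF
  have hsub : {ω : ℕ → Fin N | ∀ k ∈ S, ω k = v k} ⊆
      ⋃ g ∈ F, {ω : ℕ → Fin N | ∀ k : Fin t, ω k = g k} := by
    intro ω hω
    refine Set.mem_iUnion₂.mpr ⟨fun k : Fin t => ω k, ?_, fun k => rfl⟩
    simp only [hF, Finset.mem_filter, Finset.mem_univ, true_and, Finset.mem_coe]
    exact fun k hk => hω k hk
  refine (measure_mono hsub).trans ?_
  refine (measure_biUnion_finset_le F _).trans ?_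
  have hstep : ∑ g ∈ F, μ {ω : ℕ → Fin N | ∀ k : Fin t, ω k = g k}
      = ENNReal.ofReal (∑ g ∈ F, ∏ k, p (g k)) := by
    rw [ENNReal.ofReal_sum_of_nonneg (fun g _ => Finset.prod_nonneg fun k _ => hp _)]
    exact Finset.sum_congr rfl fun g _ => hμ t g
  rw [hstep]
  apply ENNReal.ofReal_le_ofReal
  -- key combinatorial identity
  set w : Fin t → Fin N → ℝ := fun k a => if k ∈ S then (if a = v k then p a else 0) else p a with hw
  have hkey : ∑ g ∈ F, ∏ k, p (g k) = ∑ g : Fin t → Fin N, ∏ k, w k (g k) := by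
    rw [hF, Finset.sum_filter]
    apply Finset.sum_congr rfl
    intro g _
    by_cases hg : ∀ k ∈ S, g k = v k
    · rw [if_pos hg]
      apply Finset.prod_congr rfl
      intro k _
      by_cases hk : k ∈ S
      · simp [hw, hk, hg k hk]
      · simp [hw, hk]
    · rw [if_neg hg]
      push_neg at hg
      obtain ⟨k₀, hk₀, hne⟩ := hg
      exact (Finset.prod_eq_zero (Finset.mem_univ k₀) (by simp [hw, hk₀, hne])).symm
  have hfub : ∑ g : Fin t → Fin N, ∏ k, w k (g k) = ∏ k, ∑ a, w k a := by
    rw [Finset.prod_univ_sum (fun _ => Finset.univ) w, Fintype.piFinset_univ]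
  rw [hkey, hfub]
  have : ∀ k : Fin t, ∑ a, w k a = if k ∈ S then p (v k) else 1 := by
    intro k
    by_cases hk : k ∈ S
    · simp only [hw, if_pos hk]
      rw [Finset.sum_ite_eq' Finset.univ (v k) p]
      simp [hk]
    · simp [hw, hk, hpsum]
  refine le_of_eq ?_
  calc ∏ k, ∑ a, w k a = ∏ k, if k ∈ S then p (v k) else 1 :=
        Finset.prod_congr rfl fun k _ => this k
    _ = ∏ k ∈ S, p (v k) := by
        rw [← Finset.prod_filter]
        congr 1
        ext k
        simp


lemma pdelta_one (r : Fin 1 → ℝ) (hr : ∀ a, r a ∈ Set.Ioo (0:ℝ) 1) (δ : ℝ)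
    (hδ : ∀ a, δ < r a) (i j : List (Fin 1)) (hi : i ∈ Pdelta r δ) (hj : j ∈ Pdelta r δ) :
    i = j := by
  have hrw : ∀ l : List (Fin 1), rword r l = r 0 ^ l.length := by
    intro l
    induction l with
    | nil => simp [rword]
    | cons a l ih =>
      have : a = 0 := Subsingleton.elim _ _
      simp [rword, List.map_cons, this] at ih ⊢
      rw [ih]; ring
  have hδ1 : δ < 1 := (hδ 0).trans (hr 0).2
  have hr0 : 0 < r 0 := (hr 0).1
  have hr1 : r 0 < 1 := (hr 0).2
  have hne : ∀ l : List (Fin 1), l ∈ Pdelta r δ → l ≠ [] := by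
    rintro l ⟨h1, _⟩ rfl
    rw [hrw] at h1
    simp at h1
    linarith
  have hlen : ∀ l l' : List (Fin 1), l ∈ Pdelta r δ → l' ∈ Pdelta r δ →
      l.length ≤ l'.length := by
    intro l l' hl hl'
    by_contra hc
    push_neg at hc
    have h1 : rword r l' ≤ δ := hl'.1
    have h2 : δ < rword r l.dropLast := hl.2
    rw [hrw] at h1 h2
    rw [List.length_dropLast] at h2
    have hle : r 0 ^ (l.length - 1) ≤ r 0 ^ l'.length := by
      apply pow_le_pow_of_le_one (le_of_lt hr0) (le_of_lt hr1)
      have := hne l' hl'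
      have : l'.length ≠ 0 := fun h => this (List.eq_nil_of_length_eq_zero h)
      omega
    linarith
  have : i.length = j.length := le_antisymm (hlen i j hi hj) (hlen j i hj hi)
  apply List.ext_getElem this
  intro n h1 h2
  exact Subsingleton.elim _ _


open MeasureTheory Finset in
/-- probability of fast hitting: for distinct states i, j ∈ P_δ
of the chain X_t^δ (driven by i.i.d. letters with distribution (p_a)), if at
least m transitions are needed to hit j from i, then
P_i(τ_j < L_δ) ≤ p^m/(1-p) + p^{ℓ_δ}(L_δ - ℓ_δ), where p = max_a p_a. -/
theorem stmt13 {N : ℕ} (hN : 0 < N) (p r : Fin N → ℝ)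
    (hp : ∀ i, 0 < p i) (hpsum : ∑ i, p i = 1)
    (hr : ∀ i, r i ∈ Set.Ioo (0 : ℝ) 1)
    (δ : ℝ) (hδ0 : 0 < δ) (hδ : ∀ a, δ < r a)
    (μ : Measure (ℕ → Fin N)) [IsProbabilityMeasure μ]
    (hμ : ∀ (n : ℕ) (f : Fin n → Fin N),
      μ {ω | ∀ k : Fin n, ω k = f k} = ENNReal.ofReal (∏ k, p (f k)))
    (i j : List (Fin N)) (hi : i ∈ Pdelta r δ) (hj : j ∈ Pdelta r δ) (hij : i ≠ j)
    (X : (ℕ → Fin N) → ℕ → List (Fin N))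
    (hX0 : ∀ ω, X ω 0 = i)
    (hXmem : ∀ ω t, X ω (t + 1) ∈ Pdelta r δ)
    (hXstep : ∀ ω t, cyl (ω t :: X ω t) ⊆ cyl (X ω (t + 1)))
    (L ℓ : ℕ)
    (hL : IsGreatest (List.length '' Pdelta r δ) L)
    (hℓ : IsLeast (List.length '' Pdelta r δ) ℓ)
    (pmax : ℝ) (hpmax : IsGreatest (Set.range p) pmax)
    (m : ℕ) (hm : ∀ ω t, X ω t = j → m ≤ t) :
    (μ {ω | ∃ t < L, X ω t = j}).toReal ≤
      pmax ^ m / (1 - pmax) + pmax ^ ℓ * ((L : ℝ) - (ℓ : ℝ)) := by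
  classical
  -- N = 1 is impossible since then i = j
  rcases Nat.lt_or_ge N 2 with hN1 | hN2
  · exfalso
    interval_cases N
    exact hij (pdelta_one r hr δ hδ i j hi hj)
  -- basic facts about pmax
  obtain ⟨a₀, ha₀⟩ := hpmax.1
  have hpm0 : 0 < pmax := ha₀ ▸ hp a₀
  have hple : ∀ a, p a ≤ pmax := fun a => hpmax.2 ⟨a, rfl⟩
  have hpm1 : pmax < 1 := by
    obtain ⟨a₁, ha₁⟩ : ∃ a₁ : Fin N, a₁ ≠ a₀ := by
      by_cases h0 : a₀ = ⟨0, by omega⟩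
      · exact ⟨⟨1, by omega⟩, by rw [h0]; intro h; exact absurd (congrArg Fin.val h) (by simp)⟩
      · exact ⟨⟨0, by omega⟩, fun h => h0 h.symm⟩
    have hsub : ({a₀, a₁} : Finset (Fin N)) ⊆ Finset.univ := Finset.subset_univ _
    have : p a₀ + p a₁ ≤ ∑ a, p a := by
      rw [← Finset.sum_pair (Ne.symm ha₁)]
      exact Finset.sum_le_sum_of_subset_of_nonneg hsub (fun a _ _ => (hp a).le)
    rw [hpsum] at this
    have h1 := hp a₁
    rw [ha₀] at this
    linarith
  set J := j.length with hJ
  have hJL : J ≤ L := hL.2 ⟨j, hj, rfl⟩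
  have hℓJ : ℓ ≤ J := hℓ.2 ⟨j, hj, rfl⟩
  set d0 : Fin N := ⟨0, hN⟩ with hd0
  set q : ℕ → Fin N := fun s => j.getD s d0 with hq
  -- the constrained sets
  set S : (t : ℕ) → Finset (Fin t) := fun t =>
    Finset.image (fun s : Fin (min t J) =>
      (⟨t - 1 - (s : ℕ), by have := s.isLt; omega⟩ : Fin t)) Finset.univ with hS
  set E : ℕ → Set (ℕ → Fin N) := fun t =>
    {ω | ∀ k ∈ S t, ω k = q (t - 1 - (k : ℕ))} with hE
  have hcard : ∀ t, (S t).card = min t J := by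
    intro t
    rw [hS]
    rw [Finset.card_image_of_injective _ ?_, Finset.card_univ, Fintype.card_fin]
    intro s₁ s₂ h
    have h1 := s₁.isLt
    have h2 := s₂.isLt
    have := congrArg Fin.val h
    simp only at this
    exact Fin.ext (by omega)
  -- measure bound for E t
  have hEbound : ∀ t, μ (E t) ≤ ENNReal.ofReal (pmax ^ (min t J)) := by
    intro t
    refine (measure_constrained_le p (fun a => (hp a).le) hpsum μ hμ t (S t)
      (fun k => q (t - 1 - (k : ℕ)))).trans ?_
    apply ENNReal.ofReal_le_ofReal
    calc ∏ k ∈ S t, p (q (t - 1 - (k : ℕ)))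
        ≤ ∏ _k ∈ S t, pmax :=
          Finset.prod_le_prod (fun k _ => (hp _).le) (fun k _ => hple _)
      _ = pmax ^ (min t J) := by rw [Finset.prod_const, hcard t]
  -- containment
  have hT : {ω | ∃ t < L, X ω t = j} ⊆ ⋃ t ∈ Finset.Ico m L, E t := by
    rintro ω ⟨t, htL, htX⟩
    refine Set.mem_iUnion₂.mpr ⟨t, Finset.mem_Ico.mpr ⟨hm ω t htX, htL⟩, ?_⟩
    intro k hk
    rw [hS] at hk
    simp only [Finset.mem_image, Finset.mem_univ, true_and] at hk
    obtain ⟨s, hs⟩ := hk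
    have hslt := s.isLt
    have hkval : (k : ℕ) = t - 1 - (s : ℕ) := by rw [← hs]
    have hpre : j <+: (List.ofFn fun s : Fin t => ω (t - 1 - (s : ℕ))) ++ i := by
      rw [← htX]; exact chain_prefix hN2 i X hX0 hXstep ω t
    have hsJ : (s : ℕ) < J := lt_of_lt_of_le hslt (min_le_right _ _)
    have hst : (s : ℕ) < t := lt_of_lt_of_le hslt (min_le_left _ _)
    have h1 : j[(s : ℕ)] = ((List.ofFn fun s : Fin t => ω (t - 1 - (s : ℕ))) ++ i)[(s : ℕ)]'
        (by simp; omega) := hpre.getElem hsJ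
    rw [List.getElem_append_left (by simp [hst])] at h1
    rw [List.getElem_ofFn] at h1
    have h2 : q (t - 1 - (k : ℕ)) = j[(s : ℕ)] := by
      rw [hkval, hq]
      have : t - 1 - (t - 1 - (s : ℕ)) = (s : ℕ) := by omega
      rw [this]
      exact List.getD_eq_getElem j d0 hsJ
    rw [h2, h1, hkval]
  -- put it together in ℝ≥0∞
  have hmain : μ {ω | ∃ t < L, X ω t = j} ≤
      ENNReal.ofReal (∑ t ∈ Finset.Ico m L, pmax ^ (min t J)) := by
    refine (measure_mono hT).trans ?_
    refine (measure_biUnion_finset_le _ _).trans ?_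
    rw [ENNReal.ofReal_sum_of_nonneg (fun t _ => pow_nonneg hpm0.le _)]
    exact Finset.sum_le_sum fun t _ => hEbound t
  refine (ENNReal.toReal_le_of_le_ofReal
    (Finset.sum_nonneg fun t _ => pow_nonneg hpm0.le _) hmain).trans ?_
  -- the real estimate
  have hsplit := Finset.sum_filter_add_sum_filter_not (Finset.Ico m L)
    (fun t => t < J) (fun t => pmax ^ (min t J))
  rw [← hsplit]
  have hA : ∑ t ∈ (Finset.Ico m L).filter (fun t => t < J), pmax ^ (min t J)
      ≤ pmax ^ m / (1 - pmax) := by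
    have e1 : ∀ t ∈ (Finset.Ico m L).filter (fun t => t < J),
        pmax ^ (min t J) = pmax ^ t := by
      intro t ht
      simp only [Finset.mem_filter] at ht
      rw [min_eq_left ht.2.le]
    rw [Finset.sum_congr rfl e1]
    have hsub : (Finset.Ico m L).filter (fun t => t < J) ⊆ Finset.Ico m J := by
      intro t ht
      simp only [Finset.mem_filter, Finset.mem_Ico] at ht ⊢
      exact ⟨ht.1.1, ht.2⟩
    refine (Finset.sum_le_sum_of_subset_of_nonneg hsub
      (fun t _ _ => pow_nonneg hpm0.le _)).trans ?_
    rw [Finset.sum_Ico_eq_sum_range]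
    have : ∀ k, pmax ^ (m + k) = pmax ^ m * pmax ^ k := fun k => pow_add pmax m k
    rw [Finset.sum_congr rfl fun k _ => this k, ← Finset.mul_sum]
    rw [div_eq_mul_inv]
    refine mul_le_mul_of_nonneg_left ?_ (pow_nonneg hpm0.le m)
    refine (Summable.sum_le_tsum _ (fun k _ => pow_nonneg hpm0.le _)
      (summable_geometric_of_lt_one hpm0.le hpm1)).trans ?_
    rw [tsum_geometric_of_lt_one hpm0.le hpm1]
  have hB : ∑ t ∈ (Finset.Ico m L).filter (fun t => ¬ t < J), pmax ^ (min t J)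
      ≤ pmax ^ ℓ * ((L : ℝ) - (ℓ : ℝ)) := by
    have e1 : ∀ t ∈ (Finset.Ico m L).filter (fun t => ¬ t < J),
        pmax ^ (min t J) = pmax ^ J := by
      intro t ht
      simp only [Finset.mem_filter, not_lt] at ht
      rw [min_eq_right ht.2]
    rw [Finset.sum_congr rfl e1, Finset.sum_const, nsmul_eq_mul]
    have hcardle : ((Finset.Ico m L).filter (fun t => ¬ t < J)).card ≤ L - J := by
      have hsub : (Finset.Ico m L).filter (fun t => ¬ t < J) ⊆ Finset.Ico J L := by
        intro t ht
        simp only [Finset.mem_filter, Finset.mem_Ico, not_lt] at ht ⊢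
        exact ⟨ht.2, ht.1.2⟩
      calc _ ≤ (Finset.Ico J L).card := Finset.card_le_card hsub
        _ = L - J := Nat.card_Ico J L
    have h1 : (((Finset.Ico m L).filter (fun t => ¬ t < J)).card : ℝ) ≤ (L : ℝ) - (ℓ : ℝ) := by
      calc (((Finset.Ico m L).filter (fun t => ¬ t < J)).card : ℝ) ≤ ((L - J : ℕ) : ℝ) := by
            exact_mod_cast hcardle
        _ = (L : ℝ) - (J : ℝ) := by rw [Nat.cast_sub hJL]
        _ ≤ (L : ℝ) - (ℓ : ℝ) := by
            have : (ℓ : ℝ) ≤ (J : ℝ) := Nat.cast_le.mpr hℓJ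
            linarith
    have h2 : pmax ^ J ≤ pmax ^ ℓ := pow_le_pow_of_le_one hpm0.le hpm1.le hℓJ
    calc (((Finset.Ico m L).filter (fun t => ¬ t < J)).card : ℝ) * pmax ^ J
        ≤ ((L : ℝ) - (ℓ : ℝ)) * pmax ^ ℓ := by
          apply mul_le_mul h1 h2 (pow_nonneg hpm0.le _) ?_
          have : (0:ℝ) ≤ ((L - J : ℕ) : ℝ) := Nat.cast_nonneg _
          have hc := Nat.cast_nonneg (α := ℝ) (((Finset.Ico m L).filter (fun t => ¬ t < J)).card)
          linarith
      _ = pmax ^ ℓ * ((L : ℝ) - (ℓ : ℝ)) := by ring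
  linarith
end
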